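/- For all natural numbers n and r with r ≤ n, there exists a set C ⊆ {0,1}^n such that every β ∈ {0,1}^n is within Hamming distance r of some α ∈ C (i.e., the Hamming balls of radius r around the elements of C cover {0,1}^n), and |C| · ∑_{i=0}^{r} C(n,i) ≤ (n+1) · 2^n. -/

import Mathlib

open Finset

lemma ball_card (n r : ℕ) (β : Fin n → Bool) :
    ({α : Fin n → Bool | hammingDist α β ≤ r} : Finset _).card
      = ∑ i ∈ Finset.range (r + 1), n.choose i := by
  have h1 : ({α : Fin n → Bool | hammingDist α β ≤ r} : Finset _).card
      = ({s : Finset (Fin n) | s.card ≤ r} : Finset _).card := by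
    apply Finset.card_bij (fun α _ => ({i | α i ≠ β i} : Finset (Fin n)))
    · intro α hα
      simp only [mem_filter, mem_univ, true_and] at hα ⊢
      exact hα
    · intro α hα α' hα' h
      funext i
      by_cases hi : α i = β i
      · have : i ∉ ({j | α j ≠ β j} : Finset (Fin n)) := by simp [hi]
        rw [h] at this
        simp at this
        rw [hi, ← this]
      · have : i ∈ ({j | α j ≠ β j} : Finset (Fin n)) := by simp [hi]
        rw [h] at this
        simp at this
        cases hb : β i <;> revert hi this <;> cases α i <;> cases α' i <;> simp_all
    · intro s hs
      refine ⟨fun i => if i ∈ s then !(β i) else β i, ?_, ?_⟩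
      · simp only [mem_filter, mem_univ, true_and] at hs ⊢
        have : hammingDist (fun i => if i ∈ s then !(β i) else β i) β = s.card := by
          unfold hammingDist
          congr 1
          ext i
          by_cases hi : i ∈ s <;> simp [hi]
        omega
      · ext i
        by_cases hi : i ∈ s <;> simp [hi]
  rw [h1]
  have h2 : ({s : Finset (Fin n) | s.card ≤ r} : Finset _)
      = (Finset.range (r+1)).biUnion (fun i => Finset.univ.powersetCard i) := by
    ext s
    simp [Finset.mem_powersetCard_univ, Nat.lt_succ_iff]
  rw [h2, Finset.card_biUnion]
  · apply Finset.sum_congr rfl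
    intro i _
    rw [Finset.card_powersetCard, Finset.card_univ, Fintype.card_fin]
  · intro i _ j _ hij
    simp only [Finset.disjoint_left, Finset.mem_powersetCard_univ]
    intro s h1 h2
    exact hij (h1 ▸ h2)


lemma greedy (n r : ℕ) (t : ℕ) :
    ∀ V : Finset (Fin n → Bool), ∃ C : Finset (Fin n → Bool), C.card ≤ t ∧
      ({β ∈ V | ∀ α ∈ C, ¬ hammingDist α β ≤ r} : Finset _).card * (2^n)^t
        ≤ V.card * (2^n - ∑ i ∈ Finset.range (r + 1), n.choose i)^t := by
  set S := ∑ i ∈ Finset.range (r + 1), n.choose i with hS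
  set M := 2^n with hM
  induction t with
  | zero =>
    intro V
    exact ⟨∅, le_refl 0, by simpa using Finset.card_filter_le V _⟩
  | succ t ih =>
    intro V
    -- averaging: find a good center
    have hsum : ∑ α : Fin n → Bool, ({β ∈ V | hammingDist α β ≤ r} : Finset _).card
        = S * V.card := by
      calc ∑ α : Fin n → Bool, ({β ∈ V | hammingDist α β ≤ r} : Finset _).card
          = ∑ α : Fin n → Bool, ∑ β ∈ V, if hammingDist α β ≤ r then 1 else 0 := by
            exact Finset.sum_congr rfl fun α _ => Finset.card_filter _ _
        _ = ∑ β ∈ V, ∑ α : Fin n → Bool, if hammingDist α β ≤ r then 1 else 0 :=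
            Finset.sum_comm
        _ = ∑ β ∈ V, S := by
            refine Finset.sum_congr rfl fun β _ => ?_
            rw [← Finset.card_filter]
            exact ball_card n r β
        _ = S * V.card := by rw [Finset.sum_const, smul_eq_mul, mul_comm]
    obtain ⟨α₀, -, hα₀⟩ := Finset.exists_max_image Finset.univ
      (fun α => ({β ∈ V | hammingDist α β ≤ r} : Finset _).card) ⟨fun _ => false, mem_univ _⟩
    have havg : S * V.card ≤ M * ({β ∈ V | hammingDist α₀ β ≤ r} : Finset _).card := by
      rw [← hsum]
      calc ∑ α : Fin n → Bool, ({β ∈ V | hammingDist α β ≤ r} : Finset _).card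
          ≤ Finset.univ.card • ({β ∈ V | hammingDist α₀ β ≤ r} : Finset _).card :=
            Finset.sum_le_card_nsmul _ _ _ (fun α _ => hα₀ α (mem_univ _))
        _ = M * _ := by rw [smul_eq_mul, Finset.card_univ, Fintype.card_fun,
            Fintype.card_fin, Fintype.card_bool]
    set V' := ({β ∈ V | ¬ hammingDist α₀ β ≤ r} : Finset _) with hV'
    obtain ⟨C', hC'card, hC'⟩ := ih V'
    refine ⟨insert α₀ C', (Finset.card_insert_le _ _).trans (by omega), ?_⟩
    have hsub : ({β ∈ V | ∀ α ∈ insert α₀ C', ¬ hammingDist α β ≤ r} : Finset _)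
        ⊆ ({β ∈ V' | ∀ α ∈ C', ¬ hammingDist α β ≤ r} : Finset _) := by
      intro β hβ
      simp only [Finset.mem_filter, Finset.mem_insert, hV'] at hβ ⊢
      exact ⟨⟨hβ.1, hβ.2 α₀ (Or.inl rfl)⟩, fun α hα => hβ.2 α (Or.inr hα)⟩
    have hV'card : V'.card * M ≤ V.card * (M - S) := by
      have h1 : V'.card = V.card - ({β ∈ V | hammingDist α₀ β ≤ r} : Finset _).card := by
        rw [hV']
        have := Finset.card_filter_add_card_filter_not
          (s := V) (p := fun β => hammingDist α₀ β ≤ r)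
        omega
      have h2 : ({β ∈ V | hammingDist α₀ β ≤ r} : Finset _).card ≤ V.card :=
        Finset.card_filter_le _ _
      rw [h1, Nat.sub_mul, Nat.mul_sub]
      exact Nat.sub_le_sub_left
        (le_of_eq_of_le (mul_comm _ _) (havg.trans_eq (mul_comm _ _))) _
    calc ({β ∈ V | ∀ α ∈ insert α₀ C', ¬ hammingDist α β ≤ r} : Finset _).card * M^(t+1)
        = ({β ∈ V | ∀ α ∈ insert α₀ C', ¬ hammingDist α β ≤ r} : Finset _).card * M^t * M := by
          ring
      _ ≤ ({β ∈ V' | ∀ α ∈ C', ¬ hammingDist α β ≤ r} : Finset _).card * M^t * M := by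
          exact Nat.mul_le_mul_right _ (Nat.mul_le_mul_right _ (Finset.card_le_card hsub))
      _ ≤ V'.card * (M - S)^t * M := Nat.mul_le_mul_right _ hC'
      _ = V'.card * M * (M - S)^t := by ring
      _ ≤ V.card * (M - S) * (M - S)^t := Nat.mul_le_mul_right _ hV'card
      _ = V.card * (M - S)^(t+1) := by ring


/-- For all `n` and `r ≤ n`, there exists a covering code `C ⊆ {0,1}^n` of radius `r`
(every `β ∈ {0,1}^n` is within Hamming distance `r` of some `α ∈ C`) with
`|C| · ∑_{i=0}^{r} C(n,i) ≤ (n+1) · 2^n`. -/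
theorem stmt_14 (n r : ℕ) (hr : r ≤ n) :
    ∃ C : Finset (Fin n → Bool),
      (∀ β : Fin n → Bool, ∃ α ∈ C, hammingDist α β ≤ r) ∧
      C.card * ∑ i ∈ Finset.range (r + 1), n.choose i ≤ (n + 1) * 2 ^ n := by
  set S := ∑ i ∈ Finset.range (r + 1), n.choose i with hSdef
  set M := 2^n with hMdef
  have hS1 : 1 ≤ S := by
    calc 1 = n.choose 0 := (Nat.choose_zero_right n).symm
      _ ≤ S := Finset.single_le_sum (f := fun i => n.choose i) (by simp)
          (Finset.mem_range.mpr (by omega))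
  have hSM : S ≤ M := by
    rw [hMdef, ← Nat.sum_range_choose n, hSdef]
    exact Finset.sum_le_sum_of_subset (Finset.range_subset_range.mpr (by omega))
  have hMpos : 0 < M := Nat.pow_pos (by norm_num)
  clear_value S M
  set t := n * M / S + 1 with htdef
  have hdm := Nat.div_add_mod (n * M) S
  have hmod : n * M % S < S := Nat.mod_lt _ hS1
  have htS : t * S = S * (n * M / S) + S := by
    rw [htdef, add_mul, one_mul, mul_comm]
  clear_value t
  have ht0 : 0 < t := htdef ▸ Nat.succ_pos _
  have htlow : n * M < t * S := by omega
  have hthigh : t * S ≤ (n + 1) * M := by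
    rw [add_mul, one_mul]
    omega
  have htn : n ≤ t := by
    by_contra h
    push_neg at h
    have h1 : t * S ≤ n * S := Nat.mul_le_mul_right S (by omega)
    have h2 : n * S ≤ n * M := Nat.mul_le_mul_left n hSM
    omega
  -- key binomial inequality
  have hchoose : ∀ i ≤ n, n.choose i * M ^ i ≤ t.choose i * S ^ i := by
    intro i hi
    have hdesc : n.descFactorial i * M ^ i ≤ t.descFactorial i * S ^ i := by
      have e1 : ∀ (a b : ℕ), (∏ j ∈ Finset.range i, (a - j)) * b ^ i
          = ∏ j ∈ Finset.range i, ((a - j) * b) := by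
        intro a b
        rw [Finset.prod_mul_distrib, Finset.prod_const, Finset.card_range]
      rw [Nat.descFactorial_eq_prod_range, Nat.descFactorial_eq_prod_range, e1, e1]
      refine Finset.prod_le_prod' fun j hj => ?_
      have hj' : j < i := Finset.mem_range.mp hj
      rw [Nat.sub_mul, Nat.sub_mul]
      exact tsub_le_tsub (le_of_lt htlow) (Nat.mul_le_mul_left j hSM)
    rw [Nat.descFactorial_eq_factorial_mul_choose, Nat.descFactorial_eq_factorial_mul_choose,
      mul_assoc, mul_assoc] at hdesc
    exact Nat.le_of_mul_le_mul_left hdesc (Nat.factorial_pos i)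
  have hA : 2 ^ n * M ^ t ≤ (S + M) ^ t := by
    rw [add_pow]
    calc 2 ^ n * M ^ t = ∑ i ∈ Finset.range (n + 1), n.choose i * M ^ t := by
          rw [← Finset.sum_mul, Nat.sum_range_choose]
      _ ≤ ∑ i ∈ Finset.range (n + 1), S ^ i * M ^ (t - i) * t.choose i := by
          refine Finset.sum_le_sum fun i hi => ?_
          have hi' : i ≤ n := by
            have := Finset.mem_range.mp hi; omega
          calc n.choose i * M ^ t = n.choose i * M ^ i * M ^ (t - i) := by
                rw [mul_assoc, ← pow_add]
                congr 2
                omega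
            _ ≤ t.choose i * S ^ i * M ^ (t - i) :=
                Nat.mul_le_mul_right _ (hchoose i hi')
            _ = S ^ i * M ^ (t - i) * t.choose i := by ring
      _ ≤ ∑ i ∈ Finset.range (t + 1), S ^ i * M ^ (t - i) * t.choose i :=
          Finset.sum_le_sum_of_subset (Finset.range_subset_range.mpr (by omega))
  have hB : (M - S) ^ t * M < M ^ t := by
    have key : ((M - S) ^ t * M) * M ^ t < M ^ t * M ^ t := by
      calc ((M - S) ^ t * M) * M ^ t = (M - S) ^ t * (2 ^ n * M ^ t) := by
            rw [hMdef]; ring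
        _ ≤ (M - S) ^ t * (S + M) ^ t := Nat.mul_le_mul_left _ hA
        _ = ((M - S) * (S + M)) ^ t := (mul_pow _ _ _).symm
        _ = (M ^ 2 - S ^ 2) ^ t := by
            congr 1
            have h := Nat.sq_sub_sq M S
            rw [h, add_comm M S, mul_comm]
        _ < (M ^ 2) ^ t := by
            refine Nat.pow_lt_pow_left ?_ (Nat.pos_iff_ne_zero.mp ht0)
            have hS2 : 1 ≤ S ^ 2 := Nat.one_le_pow _ _ hS1
            have hM2 : 0 < M ^ 2 := Nat.pow_pos hMpos
            have hSM2 : S ^ 2 ≤ M ^ 2 := Nat.pow_le_pow_left hSM 2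
            omega
        _ = M ^ t * M ^ t := by rw [← pow_mul, two_mul, pow_add]
    exact Nat.lt_of_mul_lt_mul_right key
  obtain ⟨C, hCcard, hCbound⟩ := greedy n r t Finset.univ
  have huniv : (Finset.univ : Finset (Fin n → Bool)).card = M := by
    rw [Finset.card_univ, Fintype.card_fun, Fintype.card_fin, Fintype.card_bool, hMdef]
  rw [huniv, ← hMdef, ← hSdef] at hCbound
  have hW0 : ({β ∈ (Finset.univ : Finset (Fin n → Bool)) |
      ∀ α ∈ C, ¬ hammingDist α β ≤ r} : Finset _).card = 0 := by
    by_contra h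
    have h1 : 1 ≤ ({β ∈ (Finset.univ : Finset (Fin n → Bool)) |
        ∀ α ∈ C, ¬ hammingDist α β ≤ r} : Finset _).card := by omega
    have h2 : M ^ t ≤ M * (M - S) ^ t :=
      le_trans (Nat.le_mul_of_pos_left _ (by omega)) hCbound
    exact absurd h2 (by rw [mul_comm]; exact Nat.not_le.mpr hB)
  refine ⟨C, ?_, ?_⟩
  · intro β
    rw [Finset.card_eq_zero] at hW0
    have : β ∉ ({β ∈ (Finset.univ : Finset (Fin n → Bool)) |
        ∀ α ∈ C, ¬ hammingDist α β ≤ r} : Finset _) := by rw [hW0]; exact notMem_empty _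
    simp only [Finset.mem_filter, Finset.mem_univ, true_and, not_forall] at this
    obtain ⟨α, hα, h⟩ := this
    exact ⟨α, hα, by omega⟩
  · calc C.card * S ≤ t * S := Nat.mul_le_mul_right _ hCcard
      _ ≤ (n + 1) * M := hthigh
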